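/- Let δ ∈ (0,1), T₀ ∈ ℕ, and let U be a nonnegative stochastic process adapted to a filtration F. Define the stopping time T₁ = min{t : U^t > log((t+T₀)/δ)/√(t+T₀)}. Assume U⁰ ≤ log(T₀)/√T₀ and for all t < T₁, U^{t+1} = (1 − 1/(t+T₀))U^t + b^{t+1} + W^{t+1} where b^{t+1} ≤ (t+T₀+1)^{−3/2} and (W^t) is adapted with E[W^{t+1} | F^t] = 0 and |W^{t+1}|² ≤ (t+T₀+1)^{−3/2} U^t / 2 almost surely. Then P(T₁ < ∞) ≤ δ. -/

import Mathlib

open MeasureTheory Real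

private lemma key_ineq (n : ℝ) (hn : 1 ≤ n) :
    Real.sqrt (n+1) * (1 - 1/n) + 1/(4*Real.sqrt (n+1)) ≤ Real.sqrt n := by
  have hn0 : (0:ℝ) < n := by linarith
  have hs2 : Real.sqrt n ^ 2 = n := Real.sq_sqrt hn0.le
  have hr2 : Real.sqrt (n+1) ^ 2 = n+1 := Real.sq_sqrt (by linarith)
  have hs0 : 0 < Real.sqrt n := Real.sqrt_pos.2 hn0
  have hr0 : 0 < Real.sqrt (n+1) := Real.sqrt_pos.2 (by linarith)
  set s := Real.sqrt n
  set r := Real.sqrt (n+1)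
  have hp : (s*r)^2 = n*(n+1) := by rw [mul_pow, hs2, hr2]
  have hsr : 0 < s*r := mul_pos hs0 hr0
  have key : 4*n^2 + n - 4 ≤ 4*n*(s*r) := by
    nlinarith [hp, hsr, hn, sq_nonneg (s*r - n), mul_pos hn0 hsr]
  have heq : r*(1-1/n) + 1/(4*r) = (4*n^2 + n - 4)/(4*n*r) := by
    rw [eq_div_iff (by positivity)]
    field_simp
    linear_combination (4*(n-1)) * hr2
  rw [heq, div_le_iff₀ (by positivity)]
  nlinarith [key, mul_pos hn0 hsr]

private lemma exp_recip_le (n : ℝ) (hn : 1 ≤ n) : Real.exp (1/(n+1)) ≤ (n+1)/n := by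
  have hn0 : (0:ℝ) < n := by linarith
  have h1 : (0:ℝ) < 1 - 1/(n+1) := by
    rw [sub_pos, div_lt_one (by linarith)]; linarith
  have h2 : 1 - 1/(n+1) ≤ Real.exp (-(1/(n+1))) := by
    have := Real.add_one_le_exp (-(1/(n+1))); linarith
  have h3 : Real.exp (1/(n+1)) ≤ 1/(1 - 1/(n+1)) := by
    rw [le_div_iff₀ h1]
    calc Real.exp (1/(n+1)) * (1 - 1/(n+1))
        ≤ Real.exp (1/(n+1)) * Real.exp (-(1/(n+1))) :=
          mul_le_mul_of_nonneg_left h2 (Real.exp_pos _).le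
      _ = 1 := by rw [← Real.exp_add]; simp
  refine h3.trans (le_of_eq ?_)
  field_simp
  rw [add_sub_cancel_right, div_self hn0.ne']

private lemma convex_exp_bound {x Bv L : ℝ} (hB : 0 < Bv) (hx : |x| ≤ Bv) :
    Real.exp (L * x) ≤ Real.cosh (L * Bv) + (x / Bv) * Real.sinh (L * Bv) := by
  have hax := abs_le.1 hx
  set a := (Bv + x)/(2*Bv) with ha_def
  set bq := (Bv - x)/(2*Bv) with hb_def
  have ha : 0 ≤ a := div_nonneg (by linarith [hax.1]) (by linarith)
  have hb : 0 ≤ bq := div_nonneg (by linarith [hax.2]) (by linarith)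
  have hab : a + bq = 1 := by rw [ha_def, hb_def]; field_simp; ring
  have h := convexOn_exp.2 (Set.mem_univ (L*Bv)) (Set.mem_univ (-(L*Bv))) ha hb hab
  simp only [smul_eq_mul] at h
  have harg : a * (L*Bv) + bq * (-(L*Bv)) = L * x := by
    rw [ha_def, hb_def]; field_simp; ring
  rw [harg] at h
  refine h.trans (le_of_eq ?_)
  rw [Real.cosh_eq, Real.sinh_eq, ha_def, hb_def]
  field_simp
  ring

set_option maxHeartbeats 1000000 in
/-- Supermartingale concentration lemma: with probability at least `1 − δ`, the process
`U` never exceeds the threshold `log((t+T₀)/δ)/√(t+T₀)`. -/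
theorem stmt_7 {Ω : Type*} {m0 : MeasurableSpace Ω} (μ : Measure Ω)
    [IsProbabilityMeasure μ] (ℱ : Filtration ℕ m0)
    (δ : ℝ) (hδ : δ ∈ Set.Ioo (0 : ℝ) 1) (T₀ : ℕ) (hT₀ : 0 < T₀)
    (U b W : ℕ → Ω → ℝ)
    (hUadapted : Adapted ℱ U) (hWadapted : Adapted ℱ W)
    (hUnonneg : ∀ t ω, 0 ≤ U t ω)
    (hU0 : ∀ ω, U 0 ω ≤ Real.log T₀ / Real.sqrt T₀)
    (thresh : ℕ → ℝ)
    (hthresh : ∀ t, thresh t = Real.log ((t + T₀) / δ) / Real.sqrt (t + T₀))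
    -- recursion and drift bound, valid before the stopping time `T₁`
    (hrec : ∀ t ω, (∀ s ≤ t, U s ω ≤ thresh s) →
      U (t + 1) ω = (1 - 1 / (t + T₀)) * U t ω + b (t + 1) ω + W (t + 1) ω ∧
      b (t + 1) ω ≤ ((t + T₀ + 1 : ℝ)) ^ (-(3 : ℝ) / 2))
    -- martingale-difference property and conditional variance bound
    (hWmean : ∀ t, μ[W (t + 1) | ℱ t] =ᵐ[μ] 0)
    (hWint : ∀ t, Integrable (W (t + 1)) μ)
    (hWsq : ∀ t, ∀ᵐ ω ∂μ,
      |W (t + 1) ω| ^ 2 ≤ ((t + T₀ + 1 : ℝ)) ^ (-(3 : ℝ) / 2) / 2 * U t ω) :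
    μ {ω | ∃ t, U t ω > thresh t} ≤ ENNReal.ofReal δ := by
  classical
  obtain ⟨hδ0, hδ1⟩ := hδ
  -- numeric setup
  set ν : ℕ → ℝ := fun t => (t : ℝ) + (T₀ : ℝ) with hν_def
  have hν_eq : ∀ t : ℕ, ((t : ℝ) + (T₀ : ℝ)) = ν t := fun _ => rfl
  have hT₀1 : (1:ℝ) ≤ (T₀:ℝ) := by exact_mod_cast hT₀
  have hν1 : ∀ t, (1:ℝ) ≤ ν t := fun t => by
    have ht : (0:ℝ) ≤ (t:ℝ) := Nat.cast_nonneg t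
    simp only [hν_def]; linarith
  have hν0 : ∀ t, (0:ℝ) < ν t := fun t => lt_of_lt_of_le one_pos (hν1 t)
  have hνsucc : ∀ t, ν (t+1) = ν t + 1 := fun t => by
    simp only [hν_def]; push_cast; ring
  set l : ℕ → ℝ := fun t => Real.sqrt (ν t) with hl_def
  have hl0 : ∀ t, 0 < l t := fun t => Real.sqrt_pos.2 (hν0 t)
  have hl2 : ∀ t, l t ^ 2 = ν t := fun t => Real.sq_sqrt (hν0 t).le
  set c : ℕ → ℝ := fun t => (ν t + 1) ^ (-(3:ℝ)/2) with hc_def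
  have hc0 : ∀ t, 0 < c t := fun t => Real.rpow_pos_of_pos (by linarith [hν0 t]) _
  have hlsucc : ∀ t, l (t+1) = Real.sqrt (ν t + 1) := fun t => by
    simp only [hl_def, hνsucc]
  have hlc : ∀ t, l (t+1) * c t = 1/(ν t + 1) := by
    intro t
    have h1 : (0:ℝ) < ν t + 1 := by linarith [hν0 t]
    rw [hlsucc t, Real.sqrt_eq_rpow, hc_def, ← Real.rpow_add h1]
    norm_num [Real.rpow_neg_one]
  have hl2c : ∀ t, (l (t+1))^2 * c t = 1 / l (t+1) := by
    intro t
    have h1 : (0:ℝ) < ν t + 1 := by linarith [hν0 t]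
    rw [hlsucc t, Real.sq_sqrt h1.le, Real.sqrt_eq_rpow, hc_def, one_div,
      ← Real.rpow_neg h1.le]
    simp only
    nth_rewrite 1 [← Real.rpow_one (ν t + 1)]
    rw [← Real.rpow_add h1]
    norm_num
  -- threshold facts
  have hthresh_eq : ∀ t, thresh t = Real.log (ν t / δ) / l t := by
    intro t; rw [hthresh t]
  have hthresh0 : ∀ t, 0 < thresh t := by
    intro t
    rw [hthresh_eq t]
    apply div_pos _ (hl0 t)
    apply Real.log_pos
    rw [lt_div_iff₀ hδ0]
    nlinarith [hν1 t]
  have hthreshl : ∀ t, l t * thresh t = Real.log (ν t / δ) := by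
    intro t
    rw [hthresh_eq t]
    field_simp
    exact mul_div_cancel_left₀ _ (hl0 t).ne'
  -- the core processes
  set Q : ℕ → Ω → ℝ := fun t ω => Real.exp (l t * U t ω) / ν t with hQ_def
  set A : ℕ → Set Ω := fun t => {ω | ∀ s ≤ t, U s ω ≤ thresh s} with hA_def
  set G : ℕ → Ω → ℝ := fun t => Nat.rec (Q 0)
    (fun k Gk ω => if ω ∈ A k then Q (k+1) ω else Gk ω) t with hG_def
  have hG0 : G 0 = Q 0 := rfl
  have hGsucc : ∀ k ω, G (k+1) ω = if ω ∈ A k then Q (k+1) ω else G k ω := fun _ _ => rfl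
  have hQpos : ∀ t ω, 0 < Q t ω := fun t ω => div_pos (Real.exp_pos _) (hν0 t)
  have hGpos : ∀ t ω, 0 < G t ω := by
    intro t
    induction t with
    | zero => exact fun ω => hQpos 0 ω
    | succ k ih =>
      intro ω
      rw [hGsucc]
      split
      · exact hQpos _ ω
      · exact ih ω
  -- measurability
  have hUmeas : ∀ t, Measurable[ℱ t] (U t) := fun t => hUadapted t
  have hAmeasF : ∀ t, MeasurableSet[ℱ t] (A t) := by
    intro t
    have hEq : A t = ⋂ s ∈ Set.Iic t, U s ⁻¹' Set.Iic (thresh s) := by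
      ext ω; simp [hA_def]
    rw [hEq]
    exact MeasurableSet.biInter (Set.to_countable _) fun s hs =>
      ((hUmeas s).mono (ℱ.mono hs) le_rfl) measurableSet_Iic
  have hAmeas : ∀ t, MeasurableSet (A t) := fun t => ℱ.le t _ (hAmeasF t)
  have hQmeasF : ∀ t, Measurable[ℱ t] (Q t) := fun t =>
    (Real.measurable_exp.comp ((hUmeas t).const_mul (l t))).div_const _
  have hQmeas : ∀ t, Measurable (Q t) := fun t => (hQmeasF t).mono (ℱ.le t) le_rfl
  have hGmeas : ∀ t, Measurable (G t) := by
    intro t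
    induction t with
    | zero => exact hQmeas 0
    | succ k ih =>
      have : G (k+1) = fun ω => if ω ∈ A k then Q (k+1) ω else G k ω := funext (hGsucc k)
      rw [this]
      exact Measurable.ite (hAmeas k) (hQmeas (k+1)) ih
  -- Q 0 ≤ 1
  have hν00 : ν 0 = (T₀:ℝ) := by simp [hν_def]
  have hQ0le1 : ∀ ω, Q 0 ω ≤ 1 := by
    intro ω
    have hl00 : l 0 = Real.sqrt T₀ := by rw [hl_def]; simp only; rw [hν00]
    have hsT : (0:ℝ) < Real.sqrt T₀ := Real.sqrt_pos.2 (by linarith)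
    have h1 : l 0 * U 0 ω ≤ Real.log T₀ := by
      calc l 0 * U 0 ω ≤ l 0 * (Real.log T₀ / Real.sqrt T₀) :=
            mul_le_mul_of_nonneg_left (hU0 ω) (hl0 0).le
        _ = Real.log T₀ := by rw [hl00]; field_simp
    have h2 : Real.exp (l 0 * U 0 ω) ≤ (T₀:ℝ) := by
      calc Real.exp (l 0 * U 0 ω) ≤ Real.exp (Real.log T₀) := Real.exp_le_exp.2 h1
        _ = (T₀:ℝ) := Real.exp_log (by linarith)
    rw [hQ_def]
    simp only
    rw [hν00, div_le_one (by linarith)]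
    exact h2
  -- membership / value lemmas about G
  have hGA : ∀ t ω, ω ∈ A t → G t ω = Q t ω := by
    intro t ω hω
    cases t with
    | zero => rfl
    | succ k =>
      rw [hGsucc]
      rw [if_pos]
      intro s hs
      exact hω s (le_trans hs (Nat.le_succ k))
  -- auxiliary: c in terms of the given casts
  have hce : ∀ t : ℕ, ((t:ℝ) + (T₀:ℝ) + 1) ^ (-(3:ℝ)/2) = c t := fun _ => rfl
  have hdiv : ∀ (a b d : ℝ), 0 < d → a ≤ b → a/d ≤ b/d := fun a b d hd hab => by
    rw [div_eq_mul_inv, div_eq_mul_inv]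
    exact mul_le_mul_of_nonneg_right hab (inv_nonneg.2 hd.le)
  -- a.e. bound on W in terms of U
  have hWb : ∀ t, ∀ᵐ ω ∂μ, |W (t+1) ω| ≤ Real.sqrt (c t / 2 * U t ω) := by
    intro t
    filter_upwards [hWsq t] with ω h
    rw [hce t] at h
    have h2 : Real.sqrt (|W (t+1) ω|^2) ≤ Real.sqrt (c t / 2 * U t ω) := Real.sqrt_le_sqrt h
    rwa [Real.sqrt_sq (abs_nonneg _)] at h2
  -- deterministic bound on U (t+1) on the event A t
  set D : ℕ → ℝ := fun k => thresh k + c k + Real.sqrt (c k/2 * thresh k) with hD_def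
  have hUb : ∀ t, ∀ᵐ ω ∂μ, ω ∈ A t → U (t+1) ω ≤ D t := by
    intro t
    filter_upwards [hWb t] with ω hW hmem
    obtain ⟨heq, hb⟩ := hrec t ω hmem
    rw [hν_eq t] at heq
    rw [hce t] at hb
    have h0 : (0:ℝ) ≤ 1/ν t := by positivity
    have h1 : (1 - 1/ν t) * U t ω ≤ U t ω := by
      have := mul_nonneg h0 (hUnonneg t ω)
      nlinarith [this]
    have h2 : W (t+1) ω ≤ Real.sqrt (c t/2 * thresh t) := by
      refine le_trans (le_abs_self _) (le_trans hW ?_)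
      apply Real.sqrt_le_sqrt
      exact mul_le_mul_of_nonneg_left (hmem t le_rfl) (by positivity)
    have hDt : D t = thresh t + c t + Real.sqrt (c t/2 * thresh t) := rfl
    have h4 : U t ω ≤ thresh t := hmem t le_rfl
    rw [heq, hDt]
    linarith
  have hGstop : ∀ N ω, (∃ t ≤ N, thresh t < U t ω) → 1/δ < G N ω := by
    intro N ω hex
    have hex' : ∃ t, thresh t < U t ω := by obtain ⟨t, _, h⟩ := hex; exact ⟨t, h⟩
    set σ := Nat.find hex' with hσ_def
    have hσ_spec : thresh σ < U σ ω := Nat.find_spec hex'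
    have hσ_min : ∀ s, s < σ → U s ω ≤ thresh s := by
      intro s hs
      have := Nat.find_min hex' hs
      exact le_of_not_gt this
    have hσ_le : σ ≤ N := by
      obtain ⟨t, htN, h⟩ := hex
      exact le_trans (Nat.find_le h) htN
    have h1 : G σ ω = Q σ ω := by
      cases hσc : σ with
      | zero => rfl
      | succ k =>
        rw [hGsucc, if_pos]
        intro s hsk
        exact hσ_min s (by omega)
    have h2 : ∀ k, σ ≤ k → G k ω = Q σ ω := by
      intro k hk
      induction k with
      | zero =>
        have : σ = 0 := Nat.le_zero.1 hk
        rw [← this]; exact h1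
      | succ m ih =>
        rcases Nat.lt_or_ge m σ with hlt | hge
        · have : σ = m + 1 := by omega
          rw [← this]; exact h1
        · rw [hGsucc, if_neg, ih hge]
          intro hmem
          exact absurd (hmem σ hge) (not_le.2 hσ_spec)
    rw [h2 N hσ_le]
    have hlog : Real.log (ν σ / δ) < l σ * U σ ω := by
      rw [← hthreshl σ]
      exact mul_lt_mul_of_pos_left hσ_spec (hl0 σ)
    have hpos : 0 < ν σ / δ := div_pos (hν0 σ) hδ0
    have hexp : ν σ / δ < Real.exp (l σ * U σ ω) := by
      rw [← Real.exp_log hpos]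
      exact Real.exp_lt_exp.2 hlog
    have hQσ : Q σ ω = Real.exp (l σ * U σ ω) / ν σ := rfl
    rw [hQσ, lt_div_iff₀ (hν0 σ)]
    have he : 1/δ * ν σ = ν σ / δ := by ring
    linarith
  have hGbdd : ∀ t, ∃ C : ℝ, ∀ᵐ ω ∂μ, G t ω ≤ C := by
    intro t
    induction t with
    | zero => exact ⟨1, Filter.Eventually.of_forall fun ω => hQ0le1 ω⟩
    | succ k ih =>
      obtain ⟨C, hC⟩ := ih
      refine ⟨max (Real.exp (l (k+1) * D k) / ν (k+1)) C, ?_⟩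
      filter_upwards [hUb k, hC] with ω h1 h2
      rw [hGsucc]
      split_ifs with hmem
      · refine le_trans ?_ (le_max_left _ _)
        have h3 : Real.exp (l (k+1) * U (k+1) ω) ≤ Real.exp (l (k+1) * D k) :=
          Real.exp_le_exp.2 (mul_le_mul_of_nonneg_left (h1 hmem) (hl0 _).le)
        exact hdiv _ _ _ (hν0 (k+1)) h3
      · exact le_trans h2 (le_max_right _ _)
  have hGint : ∀ t, Integrable (G t) μ := by
    intro t
    obtain ⟨C, hC⟩ := hGbdd t
    refine (integrable_const C).mono' ((hGmeas t).aestronglyMeasurable) ?_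
    filter_upwards [hC] with ω h
    rw [Real.norm_eq_abs, abs_of_pos (hGpos t ω)]
    exact h
  have hstep : ∀ t, ∫ ω, G (t+1) ω ∂μ ≤ ∫ ω, G t ω ∂μ := by
    intro t
    have hn1 : (1:ℝ) ≤ ν t := hν1 t
    have hn0 : (0:ℝ) < ν t := hν0 t
    have hL0 : 0 < l (t+1) := hl0 (t+1)
    have hcc0 : 0 < c t := hc0 t
    have hνs : ν (t+1) = ν t + 1 := hνsucc t
    set L := l (t+1) with hL_def
    set B : Ω → ℝ := fun ω => Real.sqrt (c t/2 * U t ω) with hB_def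
    set g : Ω → ℝ := fun ω => if U t ω = 0 then 0 else Real.sinh (L * B ω) / B ω with hg_def
    set Y : Ω → ℝ := (A t).indicator
      (fun ω => Real.exp (L * ((1 - 1/ν t) * U t ω) + L * c t) / (ν t + 1)) with hY_def
    set Bmax := Real.sqrt (c t/2 * thresh t) with hBmax_def
    set Ymax := Real.exp (L * thresh t + L * c t) / (ν t + 1) with hYmax_def
    have hBnonneg : ∀ ω, 0 ≤ B ω := fun ω => Real.sqrt_nonneg _
    have hBmax0 : (0:ℝ) ≤ Bmax := Real.sqrt_nonneg _
    have hBle : ∀ ω, ω ∈ A t → B ω ≤ Bmax := by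
      intro ω hω
      apply Real.sqrt_le_sqrt
      exact mul_le_mul_of_nonneg_left (hω t le_rfl) (by positivity)
    have hYnonneg : ∀ ω, 0 ≤ Y ω := by
      intro ω
      rw [hY_def]
      apply Set.indicator_nonneg
      intro ω' _
      positivity
    have hYle : ∀ ω, Y ω ≤ Ymax := by
      intro ω
      rw [hY_def]
      by_cases hω : ω ∈ A t
      · rw [Set.indicator_of_mem hω]
        have h2 : (1 - 1/ν t) * U t ω ≤ 1 * U t ω := by
          apply mul_le_mul_of_nonneg_right _ (hUnonneg t ω)
          have : (0:ℝ) < 1/ν t := by positivity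
          linarith
        have h1 : (1 - 1/ν t) * U t ω ≤ thresh t := by
          have := hω t le_rfl; linarith
        rw [hYmax_def]
        apply hdiv _ _ _ (by linarith)
        apply Real.exp_le_exp.2
        have := mul_le_mul_of_nonneg_left h1 hL0.le
        linarith
      · rw [Set.indicator_of_notMem hω, hYmax_def]
        positivity
    -- measurability
    have hWmeas : Measurable (W (t+1)) := (show Measurable[ℱ (t+1)] (W (t+1)) from hWadapted (t+1)).mono (ℱ.le (t+1)) le_rfl
    have hBmeasF : Measurable[ℱ t] B := ((hUmeas t).const_mul (c t/2)).sqrt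
    have hgmeasF : Measurable[ℱ t] g := by
      rw [hg_def]
      exact Measurable.ite ((hUmeas t) (measurableSet_singleton 0)) measurable_const
        ((Real.measurable_sinh.comp (hBmeasF.const_mul L)).div hBmeasF)
    have hYmeasF : Measurable[ℱ t] Y := by
      rw [hY_def]
      exact ((Real.measurable_exp.comp
        ((((hUmeas t).const_mul (1 - 1/ν t)).const_mul L).add_const (L * c t))).div_const
          _).indicator (hAmeasF t)
    have hBmeas : Measurable B := hBmeasF.mono (ℱ.le t) le_rfl
    have hgmeas : Measurable g := hgmeasF.mono (ℱ.le t) le_rfl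
    have hYmeas : Measurable Y := hYmeasF.mono (ℱ.le t) le_rfl
    -- the pointwise inequalities
    have hQs : ∀ ω, Q (t+1) ω = Real.exp (L * U (t+1) ω) / (ν t + 1) := by
      intro ω
      show Real.exp (l (t+1) * U (t+1) ω) / ν (t+1) = _
      rw [hνs, hL_def]
    have E1 : ∀ ω, (A t).indicator (Q (t+1)) ω ≤ Y ω * Real.exp (L * W (t+1) ω) := by
      intro ω
      rw [hY_def]
      by_cases hω : ω ∈ A t
      · rw [Set.indicator_of_mem hω, Set.indicator_of_mem hω]
        obtain ⟨heq, hb⟩ := hrec t ω hω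
        rw [hν_eq t] at heq
        rw [hce t] at hb
        have hb' : L * b (t+1) ω ≤ L * c t := mul_le_mul_of_nonneg_left hb hL0.le
        have h1 : L * U (t+1) ω ≤ L * ((1 - 1/ν t) * U t ω) + L * c t + L * W (t+1) ω := by
          rw [heq]
          nlinarith [hb']
        rw [hQs ω, div_mul_eq_mul_div, ← Real.exp_add]
        exact hdiv _ _ _ (by linarith) (Real.exp_le_exp.2 h1)
      · rw [Set.indicator_of_notMem hω, Set.indicator_of_notMem hω, zero_mul]
    have E2 : ∀ᵐ ω ∂μ, Y ω * Real.exp (L * W (t+1) ω) ≤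
        Y ω * (Real.cosh (L * B ω) + W (t+1) ω * g ω) := by
      filter_upwards [hWb t] with ω hW
      apply mul_le_mul_of_nonneg_left _ (hYnonneg ω)
      have hWB : |W (t+1) ω| ≤ B ω := hW
      by_cases hU : U t ω = 0
      · have hB0 : B ω = 0 := by rw [hB_def]; simp [hU]
        have hW0 : W (t+1) ω = 0 := by
          rw [hB0] at hWB
          exact abs_nonpos_iff.1 hWB
        rw [hW0, hB0, hg_def]
        simp [hU]
      · have hB0 : 0 < B ω := by
          rw [hB_def]
          apply Real.sqrt_pos.2
          have : 0 < U t ω := lt_of_le_of_ne (hUnonneg t ω) (Ne.symm hU)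
          positivity
        have hg1 : g ω = Real.sinh (L * B ω) / B ω := by rw [hg_def]; simp [hU]
        rw [hg1]
        calc Real.exp (L * W (t+1) ω)
            ≤ Real.cosh (L * B ω) + (W (t+1) ω / B ω) * Real.sinh (L * B ω) :=
              convex_exp_bound hB0 hWB
          _ = Real.cosh (L * B ω) + W (t+1) ω * (Real.sinh (L * B ω) / B ω) := by ring
    have E5 : ∀ ω, Y ω * Real.cosh (L * B ω) ≤ (A t).indicator (Q t) ω := by
      intro ω
      rw [hY_def]
      by_cases hω : ω ∈ A t
      · rw [Set.indicator_of_mem hω, Set.indicator_of_mem hω]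
        have hLc : L^2 * c t = 1/L := hl2c t
        have hBsq : B ω^2 = c t/2 * U t ω :=
          Real.sq_sqrt (mul_nonneg (div_nonneg hcc0.le (by norm_num)) (hUnonneg t ω))
        have hB2 : (L * B ω)^2/2 = U t ω/(4*L) := by
          rw [mul_pow, hBsq,
            show L^2*(c t/2*U t ω)/2 = (L^2*c t)*U t ω/4 from by ring, hLc]
          ring
        have hcosh : Real.cosh (L * B ω) ≤ Real.exp (U t ω/(4*L)) := by
          calc Real.cosh (L * B ω) ≤ Real.exp ((L * B ω)^2/2) := Real.cosh_le_exp_half_sq _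
            _ = Real.exp (U t ω/(4*L)) := by rw [hB2]
        have hkey := key_ineq (ν t) hn1
        have hLs : L = Real.sqrt (ν t + 1) := hlsucc t
        have hlts : l t = Real.sqrt (ν t) := rfl
        have h3 : (L*(1 - 1/ν t) + 1/(4*L)) * U t ω ≤ l t * U t ω := by
          apply mul_le_mul_of_nonneg_right _ (hUnonneg t ω)
          rw [hLs, hlts]
          exact hkey
        have h1 : L * c t = 1/(ν t + 1) := hlc t
        have h2 : L * ((1 - 1/ν t) * U t ω) + U t ω/(4*L) =
            (L*(1 - 1/ν t) + 1/(4*L)) * U t ω := by ring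
        have hexp : L * ((1 - 1/ν t) * U t ω) + L * c t + U t ω/(4*L) ≤
            l t * U t ω + 1/(ν t + 1) := by linarith
        have hQt : Q t ω = Real.exp (l t * U t ω) / ν t := rfl
        rw [hQt]
        calc Real.exp (L * ((1 - 1/ν t) * U t ω) + L * c t) / (ν t + 1) * Real.cosh (L * B ω)
            ≤ Real.exp (L * ((1 - 1/ν t) * U t ω) + L * c t) / (ν t + 1) *
              Real.exp (U t ω/(4*L)) := by
              apply mul_le_mul_of_nonneg_left hcosh (by positivity)
          _ = Real.exp (L * ((1 - 1/ν t) * U t ω) + L * c t + U t ω/(4*L)) / (ν t + 1) := by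
              rw [div_mul_eq_mul_div, ← Real.exp_add]
          _ ≤ Real.exp (l t * U t ω + 1/(ν t + 1)) / (ν t + 1) :=
              hdiv _ _ _ (by linarith) (Real.exp_le_exp.2 hexp)
          _ = Real.exp (l t * U t ω) * Real.exp (1/(ν t + 1)) / (ν t + 1) := by
              rw [Real.exp_add]
          _ ≤ Real.exp (l t * U t ω) * ((ν t + 1)/ν t) / (ν t + 1) := by
              apply hdiv _ _ _ (by linarith)
              exact mul_le_mul_of_nonneg_left (exp_recip_le (ν t) hn1) (Real.exp_pos _).le
          _ = Real.exp (l t * U t ω) / ν t := by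
              field_simp
      · rw [Set.indicator_of_notMem hω, Set.indicator_of_notMem hω, zero_mul]
    -- integrability of the pieces
    have Int1 : Integrable ((A t).indicator (Q (t+1))) μ := by
      refine (integrable_const (Real.exp (L * D t) / (ν t + 1))).mono'
        (((hQmeas (t+1)).indicator (hAmeas t)).aestronglyMeasurable) ?_
      filter_upwards [hUb t] with ω h1
      rw [Real.norm_eq_abs]
      by_cases hω : ω ∈ A t
      · rw [Set.indicator_of_mem hω, abs_of_pos (hQpos _ ω), hQs ω]
        exact hdiv _ _ _ (by linarith)
          (Real.exp_le_exp.2 (mul_le_mul_of_nonneg_left (h1 hω) hL0.le))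
      · rw [Set.indicator_of_notMem hω]
        simp only [abs_zero]
        positivity
    have IntB : Integrable (fun ω => Y ω * Real.exp (L * W (t+1) ω)) μ := by
      refine (integrable_const (Ymax * Real.exp (L * Bmax))).mono'
        ((hYmeas.mul (Real.measurable_exp.comp (hWmeas.const_mul L))).aestronglyMeasurable) ?_
      filter_upwards [hWb t] with ω hW
      rw [Real.norm_eq_abs, abs_of_nonneg (mul_nonneg (hYnonneg ω) (Real.exp_pos _).le)]
      by_cases hω : ω ∈ A t
      · apply mul_le_mul (hYle ω) _ (Real.exp_pos _).le
          (le_trans (hYnonneg ω) (hYle ω))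
        apply Real.exp_le_exp.2
        apply mul_le_mul_of_nonneg_left _ hL0.le
        exact le_trans (le_abs_self _) (le_trans hW (hBle ω hω))
      · have hY0 : Y ω = 0 := by rw [hY_def]; exact Set.indicator_of_notMem hω _
        rw [hY0, zero_mul]
        positivity
    have Int3 : Integrable (fun ω => Y ω * Real.cosh (L * B ω)) μ := by
      refine (integrable_const (Ymax * Real.cosh (L * Bmax))).mono'
        ((hYmeas.mul (Real.measurable_cosh.comp (hBmeas.const_mul L))).aestronglyMeasurable) ?_
      refine Filter.Eventually.of_forall fun ω => ?_
      rw [Real.norm_eq_abs, abs_of_nonneg (mul_nonneg (hYnonneg ω) (Real.cosh_pos _).le)]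
      by_cases hω : ω ∈ A t
      · apply mul_le_mul (hYle ω) _ (Real.cosh_pos _).le (le_trans (hYnonneg ω) (hYle ω))
        apply Real.cosh_le_cosh.2
        rw [abs_of_nonneg (mul_nonneg hL0.le (hBnonneg ω)),
          abs_of_nonneg (mul_nonneg hL0.le hBmax0)]
        exact mul_le_mul_of_nonneg_left (hBle ω hω) hL0.le
      · have hY0 : Y ω = 0 := by rw [hY_def]; exact Set.indicator_of_notMem hω _
        rw [hY0, zero_mul]
        positivity
    have Int4 : Integrable ((fun ω => Y ω * g ω) * W (t+1)) μ := by
      refine (integrable_const (Ymax * Real.sinh (L * Bmax))).mono'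
        (((hYmeas.mul hgmeas).mul hWmeas).aestronglyMeasurable) ?_
      filter_upwards [hWb t] with ω hW
      have hsinh_max : (0:ℝ) ≤ Real.sinh (L * Bmax) := by
        rw [← Real.sinh_zero]
        exact Real.sinh_le_sinh.2 (by positivity)
      show ‖Y ω * g ω * W (t+1) ω‖ ≤ Ymax * Real.sinh (L * Bmax)
      by_cases hω : ω ∈ A t
      · have hgW : |g ω * W (t+1) ω| ≤ Real.sinh (L * Bmax) := by
          by_cases hU : U t ω = 0
          · rw [hg_def]
            simp [hU, hsinh_max]
          · have hU0' : 0 < U t ω := lt_of_le_of_ne (hUnonneg t ω) (Ne.symm hU)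
            have hB0 : 0 < B ω := by
              rw [hB_def]; apply Real.sqrt_pos.2; positivity
            have hg1 : g ω = Real.sinh (L * B ω) / B ω := by rw [hg_def]; simp [hU]
            have hsinh0 : (0:ℝ) ≤ Real.sinh (L * B ω) := by
              rw [← Real.sinh_zero]
              exact Real.sinh_le_sinh.2 (by positivity)
            rw [hg1, abs_mul, abs_div, abs_of_nonneg hsinh0, abs_of_pos hB0]
            calc Real.sinh (L * B ω) / B ω * |W (t+1) ω|
                ≤ Real.sinh (L * B ω) / B ω * B ω := by
                  apply mul_le_mul_of_nonneg_left hW (by positivity)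
              _ = Real.sinh (L * B ω) := by field_simp
              _ ≤ Real.sinh (L * Bmax) :=
                  Real.sinh_le_sinh.2 (mul_le_mul_of_nonneg_left (hBle ω hω) hL0.le)
        rw [Real.norm_eq_abs, mul_assoc, abs_mul, abs_of_nonneg (hYnonneg ω)]
        apply mul_le_mul (hYle ω) hgW (abs_nonneg _) (le_trans (hYnonneg ω) (hYle ω))
      · have hY0 : Y ω = 0 := by rw [hY_def]; exact Set.indicator_of_notMem hω _
        rw [Real.norm_eq_abs, hY0, zero_mul, zero_mul, abs_zero]
        exact mul_nonneg (le_trans (hYnonneg ω) (hYle ω)) hsinh_max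
    have IntQt : Integrable ((A t).indicator (Q t)) μ := by
      refine (integrable_const (Real.exp (l t * thresh t) / ν t)).mono'
        (((hQmeas t).indicator (hAmeas t)).aestronglyMeasurable) ?_
      refine Filter.Eventually.of_forall fun ω => ?_
      rw [Real.norm_eq_abs]
      by_cases hω : ω ∈ A t
      · rw [Set.indicator_of_mem hω, abs_of_pos (hQpos _ ω)]
        exact hdiv _ _ _ hn0
          (Real.exp_le_exp.2 (mul_le_mul_of_nonneg_left (hω t le_rfl) (hl0 t).le))
      · rw [Set.indicator_of_notMem hω]
        simp only [abs_zero]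
        positivity
    have Int2 : Integrable ((A t)ᶜ.indicator (G t)) μ := (hGint t).indicator (hAmeas t).compl
    -- the martingale-difference term integrates to zero
    have hYg_sm : StronglyMeasurable[ℱ t] (fun ω => Y ω * g ω) :=
      (hYmeasF.mul hgmeasF).stronglyMeasurable
    have hpull : μ[(fun ω => Y ω * g ω) * W (t+1) | ℱ t] =ᵐ[μ]
        (fun ω => Y ω * g ω) * μ[W (t+1) | ℱ t] :=
      condExp_mul_of_stronglyMeasurable_left hYg_sm Int4 (hWint t)
    have hzero : μ[(fun ω => Y ω * g ω) * W (t+1) | ℱ t] =ᵐ[μ] 0 := by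
      refine hpull.trans ?_
      filter_upwards [hWmean t] with ω h
      show Y ω * g ω * (μ[W (t+1) | ℱ t]) ω = 0
      rw [h]
      simp
    have hI0 : ∫ ω, (Y ω * g ω) * W (t+1) ω ∂μ = 0 := by
      have h1 : ∫ ω, ((fun ω => Y ω * g ω) * W (t+1)) ω ∂μ =
          ∫ ω, (μ[(fun ω => Y ω * g ω) * W (t+1) | ℱ t]) ω ∂μ :=
        (integral_condExp (ℱ.le t)).symm
      calc ∫ ω, (Y ω * g ω) * W (t+1) ω ∂μ
          = ∫ ω, (μ[(fun ω => Y ω * g ω) * W (t+1) | ℱ t]) ω ∂μ := h1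
        _ = ∫ _ω, (0:ℝ) ∂μ := integral_congr_ae hzero
        _ = 0 := integral_zero _ _
    -- core chain
    have hcore : ∫ ω, (A t).indicator (Q (t+1)) ω ∂μ ≤ ∫ ω, (A t).indicator (Q t) ω ∂μ := by
      calc ∫ ω, (A t).indicator (Q (t+1)) ω ∂μ
          ≤ ∫ ω, Y ω * Real.exp (L * W (t+1) ω) ∂μ :=
            integral_mono_ae Int1 IntB (Filter.Eventually.of_forall E1)
        _ ≤ ∫ ω, (Y ω * Real.cosh (L * B ω) + (Y ω * g ω) * W (t+1) ω) ∂μ := by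
            apply integral_mono_ae IntB (Int3.add Int4)
            filter_upwards [E2] with ω h
            calc Y ω * Real.exp (L * W (t+1) ω)
                ≤ Y ω * (Real.cosh (L * B ω) + W (t+1) ω * g ω) := h
              _ = Y ω * Real.cosh (L * B ω) + (Y ω * g ω) * W (t+1) ω := by ring
        _ = ∫ ω, Y ω * Real.cosh (L * B ω) ∂μ + ∫ ω, (Y ω * g ω) * W (t+1) ω ∂μ :=
            integral_add Int3 Int4
        _ = ∫ ω, Y ω * Real.cosh (L * B ω) ∂μ := by rw [hI0, add_zero]
        _ ≤ ∫ ω, (A t).indicator (Q t) ω ∂μ :=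
            integral_mono_ae Int3 IntQt (Filter.Eventually.of_forall E5)
    have hsplit1 : ∀ ω, G (t+1) ω = (A t).indicator (Q (t+1)) ω + (A t)ᶜ.indicator (G t) ω := by
      intro ω
      by_cases hω : ω ∈ A t
      · rw [hGsucc, if_pos hω, Set.indicator_of_mem hω,
          Set.indicator_of_notMem (Set.notMem_compl_iff.2 hω), add_zero]
      · rw [hGsucc, if_neg hω, Set.indicator_of_notMem hω, Set.indicator_of_mem (Set.mem_compl hω), zero_add]
    have hsplit2 : ∀ ω, G t ω = (A t).indicator (Q t) ω + (A t)ᶜ.indicator (G t) ω := by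
      intro ω
      by_cases hω : ω ∈ A t
      · rw [Set.indicator_of_mem hω, Set.indicator_of_notMem (Set.notMem_compl_iff.2 hω), add_zero,
          hGA t ω hω]
      · rw [Set.indicator_of_notMem hω, Set.indicator_of_mem (Set.mem_compl hω), zero_add]
    calc ∫ ω, G (t+1) ω ∂μ
        = ∫ ω, ((A t).indicator (Q (t+1)) ω + (A t)ᶜ.indicator (G t) ω) ∂μ :=
          integral_congr_ae (Filter.Eventually.of_forall hsplit1)
      _ = ∫ ω, (A t).indicator (Q (t+1)) ω ∂μ + ∫ ω, (A t)ᶜ.indicator (G t) ω ∂μ :=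
          integral_add Int1 Int2
      _ ≤ ∫ ω, (A t).indicator (Q t) ω ∂μ + ∫ ω, (A t)ᶜ.indicator (G t) ω ∂μ :=
          add_le_add hcore le_rfl
      _ = ∫ ω, ((A t).indicator (Q t) ω + (A t)ᶜ.indicator (G t) ω) ∂μ :=
          (integral_add IntQt Int2).symm
      _ = ∫ ω, G t ω ∂μ :=
          integral_congr_ae (Filter.Eventually.of_forall fun ω => (hsplit2 ω).symm)
  -- expectation bound
  have hGexp : ∀ N, ∫ ω, G N ω ∂μ ≤ 1 := by
    intro N
    induction N with
    | zero =>
      calc ∫ ω, G 0 ω ∂μ ≤ ∫ _ω, (1:ℝ) ∂μ :=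
            integral_mono (hGint 0) (integrable_const 1) (fun ω => by rw [hG0]; exact hQ0le1 ω)
        _ = 1 := by simp
    | succ k ih => exact le_trans (hstep k) ih
  -- Markov inequality at each horizon
  have hmark : ∀ N, μ {ω | ∃ t ≤ N, thresh t < U t ω} ≤ ENNReal.ofReal δ := by
    intro N
    have hsub : {ω | ∃ t ≤ N, thresh t < U t ω} ⊆ {ω | 1/δ ≤ G N ω} := by
      intro ω hω
      exact le_of_lt (hGstop N ω hω)
    refine le_trans (measure_mono hsub) ?_
    have hm := mul_meas_ge_le_integral_of_nonneg
      (f := G N) (μ := μ) (Filter.Eventually.of_forall fun ω => (hGpos N ω).le)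
      (hGint N) (1/δ)
    have hint1 := hGexp N
    have htr : (μ {ω | 1/δ ≤ G N ω}).toReal ≤ δ := by
      have h2 : (1/δ) * (μ {ω | 1/δ ≤ G N ω}).toReal ≤ 1 := le_trans hm hint1
      calc (μ {ω | 1/δ ≤ G N ω}).toReal
          = δ * (1/δ * (μ {ω | 1/δ ≤ G N ω}).toReal) := by field_simp
        _ ≤ δ * 1 := mul_le_mul_of_nonneg_left h2 hδ0.le
        _ = δ := mul_one δ
    rw [← ENNReal.ofReal_toReal (measure_ne_top μ {ω | 1/δ ≤ G N ω})]
    exact ENNReal.ofReal_le_ofReal htr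
  -- pass to the limit
  have hUnion : {ω | ∃ t, U t ω > thresh t} = ⋃ N, {ω | ∃ t ≤ N, thresh t < U t ω} := by
    ext ω
    simp only [Set.mem_setOf_eq, Set.mem_iUnion]
    constructor
    · rintro ⟨t, ht⟩; exact ⟨t, t, le_refl t, ht⟩
    · rintro ⟨N, t, _, ht⟩; exact ⟨t, ht⟩
  rw [hUnion]
  have hmono : Monotone (fun N => {ω | ∃ t ≤ N, thresh t < U t ω}) := by
    intro M N hMN ω hω
    obtain ⟨t, ht, h⟩ := hω
    exact ⟨t, le_trans ht hMN, h⟩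
  have hlim := tendsto_measure_iUnion_atTop (μ := μ) hmono
  exact le_of_tendsto' hlim hmark
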